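/- Fix an integer n ≥ 1 and assume sin(jθ) ≠ 0 for all integers 1 ≤ j ≤ n+1. Define the inter-collision times of the Galperin billiard by τ_{2k} = (x_{2k} − X_{2k})/(V_{2k} − v_{2k}) (time from the ball-wall collision 2k to the next ball-ball collision) and τ_{2k+1} = −x_{2k+1}/v_{2k+1} (time from the ball-ball collision 2k+1 to the next ball-wall collision). Then for every integer 1 ≤ j ≤ n, τ_j = −x_0·sin θ·tan θ / (V_0·sin(jθ)·sin((j+1)θ)), where θ = arctan(√(m/M)). -/

import Mathlib

set_option maxHeartbeats 1000000 in
/-- Closed form for the inter-collision times of the Galperin billiard: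
`τ_j = −x_0 sin θ tan θ / (V_0 sin(jθ) sin((j+1)θ))` for all `1 ≤ j ≤ n`,
where `θ = arctan √(m/M)` and `sin(jθ) ≠ 0` for all `1 ≤ j ≤ n+1`. -/
theorem galperin_intercollision_time_closed_form
    (M m : ℝ) (hM : 0 < M) (hm : 0 < m)
    (θ : ℝ) (hθ : θ = Real.arctan (Real.sqrt (m / M)))
    (n : ℕ) (hn : 1 ≤ n)
    (hsin : ∀ j : ℕ, 1 ≤ j → j ≤ n + 1 → Real.sin ((j : ℝ) * θ) ≠ 0)
    (V v X x τ : ℕ → ℝ)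
    (hV0 : 0 < V 0) (hv0 : v 0 = 0) (hX0x0 : X 0 < x 0) (hx0 : x 0 < 0)
    (hBBvel : ∀ k : ℕ,
      V (2 * k + 1) = ((M - m) * V (2 * k) + 2 * m * v (2 * k)) / (M + m) ∧
      v (2 * k + 1) = (2 * M * V (2 * k) + (m - M) * v (2 * k)) / (M + m))
    (hBWvel : ∀ k : ℕ, 1 ≤ k →
      V (2 * k) = V (2 * k - 1) ∧ v (2 * k) = -v (2 * k - 1))
    (hBBpos : ∀ k : ℕ, 2 * k + 1 ≤ n →
      X (2 * k + 1)
        = X (2 * k) + (X (2 * k) - x (2 * k)) * V (2 * k) / (v (2 * k) - V (2 * k)) ∧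
      x (2 * k + 1) = X (2 * k + 1))
    (hBWpos : ∀ k : ℕ, 1 ≤ k → 2 * k ≤ n →
      X (2 * k) = X (2 * k - 1) - (V (2 * k - 1) / v (2 * k - 1)) * x (2 * k - 1) ∧
      x (2 * k) = 0)
    (hτeven : ∀ k : ℕ, 2 * k ≤ n →
      τ (2 * k) = (x (2 * k) - X (2 * k)) / (V (2 * k) - v (2 * k)))
    (hτodd : ∀ k : ℕ, 2 * k + 1 ≤ n →
      τ (2 * k + 1) = -x (2 * k + 1) / v (2 * k + 1)) :
    ∀ j : ℕ, 1 ≤ j → j ≤ n →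
      τ j = -x 0 * Real.sin θ * Real.tan θ /
        (V 0 * Real.sin ((j : ℝ) * θ) * Real.sin (((j : ℝ) + 1) * θ)) := by
  have hMm : 0 < M + m := by linarith
  have hdivpos : (0 : ℝ) < m / M := div_pos hm hM
  have hθpos : 0 < θ := by
    rw [hθ, ← Real.arctan_zero]
    exact Real.arctan_strictMono (Real.sqrt_pos.mpr hdivpos)
  have hθlt : θ < Real.pi / 2 := by rw [hθ]; exact Real.arctan_lt_pi_div_two _
  have hc : 0 < Real.cos θ :=
    Real.cos_pos_of_mem_Ioo ⟨by linarith [Real.pi_pos], hθlt⟩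
  have hs : 0 < Real.sin θ :=
    Real.sin_pos_of_pos_of_lt_pi hθpos (by linarith [Real.pi_pos])
  have htan : Real.tan θ = Real.sin θ / Real.cos θ := Real.tan_eq_sin_div_cos θ
  have htansq : m * Real.cos θ ^ 2 = M * Real.sin θ ^ 2 := by
    have h1 : Real.tan θ ^ 2 = m / M := by
      rw [hθ, Real.tan_arctan, Real.sq_sqrt hdivpos.le]
    rw [Real.tan_eq_sin_div_cos, div_pow,
      div_eq_div_iff (by positivity) hM.ne'] at h1
    linarith
  obtain ⟨T, hT⟩ : ∃ T : ℝ, T = M + m := ⟨M + m, rfl⟩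
  have hT0 : T ≠ 0 := by rw [hT]; exact hMm.ne'
  have hpyth : Real.sin θ ^ 2 + Real.cos θ ^ 2 = 1 := Real.sin_sq_add_cos_sq θ
  have hmrep : m = T * Real.sin θ ^ 2 := by
    rw [hT]; linear_combination htansq - m * hpyth
  have hMrep : M = T * Real.cos θ ^ 2 := by
    rw [hT]; linear_combination -htansq - M * hpyth
  -- velocity closed forms
  have key : ∀ k : ℕ,
      (V (2 * k) = V 0 * Real.cos (2 * (k : ℝ) * θ) ∧
        v (2 * k) = -(V 0 * Real.sin (2 * (k : ℝ) * θ)) / Real.tan θ) →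
      (V (2 * k + 1) = V 0 * Real.cos ((2 * (k : ℝ) + 2) * θ) ∧
        v (2 * k + 1) = V 0 * Real.sin ((2 * (k : ℝ) + 2) * θ) / Real.tan θ) := by
    intro k hk
    obtain ⟨h1, h2⟩ := hk
    have e1 : (2 * (k : ℝ) + 2) * θ = 2 * (k : ℝ) * θ + 2 * θ := by ring
    constructor
    · rw [(hBBvel k).1, h1, h2, htan, e1, Real.cos_add, Real.cos_two_mul',
        Real.sin_two_mul, ← hT, hmrep, hMrep]
      field_simp
      ring
    · rw [(hBBvel k).2, h1, h2, htan, e1, Real.sin_add, Real.cos_two_mul',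
        Real.sin_two_mul, ← hT, hmrep, hMrep]
      field_simp
      ring
  have hvelE : ∀ k : ℕ,
      V (2 * k) = V 0 * Real.cos (2 * (k : ℝ) * θ) ∧
        v (2 * k) = -(V 0 * Real.sin (2 * (k : ℝ) * θ)) / Real.tan θ := by
    intro k
    induction k with
    | zero => norm_num [hv0]
    | succ k ih =>
      obtain ⟨hVo, hvo⟩ := key k ih
      obtain ⟨hw1, hw2⟩ := hBWvel (k + 1) (by omega)
      rw [show 2 * (k + 1) - 1 = 2 * k + 1 from by omega] at hw1 hw2
      constructor
      · rw [hw1, hVo]; push_cast; ring_nf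
      · rw [hw2, hvo]; push_cast; ring_nf
  have hvelO : ∀ k : ℕ,
      V (2 * k + 1) = V 0 * Real.cos ((2 * (k : ℝ) + 2) * θ) ∧
        v (2 * k + 1) = V 0 * Real.sin ((2 * (k : ℝ) + 2) * θ) / Real.tan θ :=
    fun k => key k (hvelE k)
  -- difference of velocities at even indices
  have hvMV : ∀ k : ℕ, v (2 * k) - V (2 * k) =
      -(V 0 * (Real.sin (2 * (k : ℝ) * θ) * Real.cos θ +
        Real.cos (2 * (k : ℝ) * θ) * Real.sin θ)) / Real.sin θ := by
    intro k
    rw [(hvelE k).1, (hvelE k).2, htan]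
    field_simp
    ring
  have hVmv : ∀ k : ℕ, V (2 * k) - v (2 * k) =
      V 0 * (Real.sin (2 * (k : ℝ) * θ) * Real.cos θ +
        Real.cos (2 * (k : ℝ) * θ) * Real.sin θ) / Real.sin θ := by
    intro k
    rw [(hvelE k).1, (hvelE k).2, htan]
    field_simp
    ring
  -- position closed forms: ball-ball step (k ≥ 1)
  have posBB : ∀ k : ℕ, 1 ≤ k → 2 * k + 1 ≤ n →
      X (2 * k) = x 0 * Real.tan θ / Real.sin (2 * (k : ℝ) * θ) →
      x (2 * k) = 0 →
      X (2 * k + 1) = x 0 * Real.sin θ / Real.sin ((2 * (k : ℝ) + 1) * θ) ∧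
        x (2 * k + 1) = X (2 * k + 1) := by
    intro k hk1 hkn hXe hxe
    have hS : Real.sin (2 * (k : ℝ) * θ) ≠ 0 := by
      have := hsin (2 * k) (by omega) (by omega); push_cast at this; exact this
    have hS' : Real.sin ((2 * (k : ℝ) + 1) * θ) ≠ 0 := by
      have := hsin (2 * k + 1) (by omega) (by omega); push_cast at this; exact this
    rw [show (2 * (k : ℝ) + 1) * θ = 2 * (k : ℝ) * θ + θ from by ring,
      Real.sin_add] at hS' ⊢
    refine ⟨?_, (hBBpos k hkn).2⟩
    rw [(hBBpos k hkn).1, hvMV k, hXe, hxe, (hvelE k).1, htan]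
    field_simp
    have hD : Real.sin θ * Real.cos (2 * ↑k * θ) + Real.cos θ * Real.sin (2 * ↑k * θ) ≠ 0 := by
      convert hS' using 1; ring
    linear_combination (-x 0) * mul_inv_cancel₀ hD
  -- position closed forms: ball-wall step
  have posBW : ∀ k : ℕ, 2 * (k + 1) ≤ n →
      X (2 * k + 1) = x 0 * Real.sin θ / Real.sin ((2 * (k : ℝ) + 1) * θ) →
      x (2 * k + 1) = X (2 * k + 1) →
      X (2 * (k + 1)) = x 0 * Real.tan θ / Real.sin ((2 * (k : ℝ) + 2) * θ) ∧
        x (2 * (k + 1)) = 0 := by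
    intro k hkn hXo hxo
    have hS2 : Real.sin ((2 * (k : ℝ) + 2) * θ) ≠ 0 := by
      have := hsin (2 * k + 2) (by omega) (by omega); push_cast at this; exact this
    have hS' : Real.sin ((2 * (k : ℝ) + 1) * θ) ≠ 0 := by
      have := hsin (2 * k + 1) (by omega) (by omega); push_cast at this; exact this
    rw [show (2 * (k : ℝ) + 1) * θ = (2 * (k : ℝ) + 2) * θ - θ from by ring,
      Real.sin_sub] at hS' hXo
    obtain ⟨hX2, hx2⟩ := hBWpos (k + 1) (by omega) hkn
    rw [show 2 * (k + 1) - 1 = 2 * k + 1 from by omega] at hX2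
    refine ⟨?_, hx2⟩
    rw [hX2, hxo, hXo, (hvelO k).1, (hvelO k).2, htan]
    field_simp
    have hD : Real.cos θ * Real.sin (2 * (↑k + 1) * θ) - Real.sin θ * Real.cos (2 * (↑k + 1) * θ) ≠ 0 := by
      rw [show 2 * ((k:ℝ) + 1) * θ = (2 * k + 2) * θ by ring]; convert hS' using 1; ring
    have hD2 : Real.sin (2 * (↑k + 1) * θ) ≠ 0 := by
      rw [show 2 * ((k:ℝ) + 1) * θ = (2 * k + 2) * θ by ring]; exact hS2
    linear_combination (-x 0 * Real.cos θ * (Real.cos θ * Real.sin (2 * (↑k + 1) * θ) - Real.sin θ * Real.cos (2 * (↑k + 1) * θ))⁻¹) * mul_inv_cancel₀ hD2 + (x 0 * (Real.sin (2 * (↑k + 1) * θ))⁻¹) * mul_inv_cancel₀ hD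
  -- combined induction
  have hpos : ∀ k : ℕ,
      (2 * k + 1 ≤ n →
        X (2 * k + 1) = x 0 * Real.sin θ / Real.sin ((2 * (k : ℝ) + 1) * θ) ∧
          x (2 * k + 1) = X (2 * k + 1)) ∧
      (2 * (k + 1) ≤ n →
        X (2 * (k + 1)) = x 0 * Real.tan θ / Real.sin ((2 * (k : ℝ) + 2) * θ) ∧
          x (2 * (k + 1)) = 0) := by
    intro k
    induction k with
    | zero =>
      have hodd : 2 * 0 + 1 ≤ n →
          X (2 * 0 + 1) = x 0 * Real.sin θ / Real.sin ((2 * ((0 : ℕ) : ℝ) + 1) * θ) ∧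
            x (2 * 0 + 1) = X (2 * 0 + 1) := by
        intro h
        obtain ⟨hX1, hx1⟩ := hBBpos 0 h
        refine ⟨?_, hx1⟩
        rw [show (2 * ((0 : ℕ) : ℝ) + 1) * θ = θ from by norm_num]
        norm_num at hX1 ⊢
        rw [hX1, hv0, zero_sub]
        field_simp [hV0.ne']
        ring
      exact ⟨hodd, fun h => posBW 0 h (hodd (by omega)).1 (hodd (by omega)).2⟩
    | succ k ih =>
      have hodd : 2 * (k + 1) + 1 ≤ n →
          X (2 * (k + 1) + 1)
            = x 0 * Real.sin θ / Real.sin ((2 * ((k + 1 : ℕ) : ℝ) + 1) * θ) ∧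
            x (2 * (k + 1) + 1) = X (2 * (k + 1) + 1) := by
        intro h
        have hXe : X (2 * (k + 1))
            = x 0 * Real.tan θ / Real.sin (2 * ((k + 1 : ℕ) : ℝ) * θ) := by
          rw [show 2 * ((k + 1 : ℕ) : ℝ) * θ = (2 * (k : ℝ) + 2) * θ from by
            push_cast; ring]
          exact (ih.2 (by omega)).1
        exact posBB (k + 1) (by omega) h hXe (ih.2 (by omega)).2
      exact ⟨hodd, fun h => posBW (k + 1) h (hodd (by omega)).1 (hodd (by omega)).2⟩
  have hOdd : ∀ k : ℕ, 2 * k + 1 ≤ n →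
      X (2 * k + 1) = x 0 * Real.sin θ / Real.sin ((2 * (k : ℝ) + 1) * θ) ∧
        x (2 * k + 1) = X (2 * k + 1) := fun k => (hpos k).1
  have hEven : ∀ k : ℕ, 1 ≤ k → 2 * k ≤ n →
      X (2 * k) = x 0 * Real.tan θ / Real.sin (2 * (k : ℝ) * θ) ∧
        x (2 * k) = 0 := by
    intro k hk1 hk2
    obtain ⟨k', rfl⟩ : ∃ k', k = k' + 1 := ⟨k - 1, by omega⟩
    rw [show 2 * ((k' + 1 : ℕ) : ℝ) * θ = (2 * (k' : ℝ) + 2) * θ from by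
      push_cast; ring]
    exact (hpos k').2 (by omega)
  -- final computation
  intro j hj1 hjn
  rcases Nat.even_or_odd j with he | ho
  · obtain ⟨k, hk⟩ := he
    have hk2 : j = 2 * k := by omega
    subst hk2
    have hk1 : 1 ≤ k := by omega
    have hS : Real.sin (2 * (k : ℝ) * θ) ≠ 0 := by
      have := hsin (2 * k) (by omega) (by omega); push_cast at this; exact this
    have hS' : Real.sin (2 * (k : ℝ) * θ) * Real.cos θ +
        Real.cos (2 * (k : ℝ) * θ) * Real.sin θ ≠ 0 := by
      have := hsin (2 * k + 1) (by omega) (by omega); push_cast at this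
      rw [show (2 * (k : ℝ) + 1) * θ = 2 * (k : ℝ) * θ + θ from by ring,
        Real.sin_add] at this
      exact this
    rw [hτeven k hjn, (hEven k hk1 hjn).2, (hEven k hk1 hjn).1, hVmv k, htan]
    push_cast
    rw [show (2 * (k : ℝ) + 1) * θ = 2 * (k : ℝ) * θ + θ from by ring,
      Real.sin_add]
    field_simp
    try ring
    try tauto
  · obtain ⟨k, hk⟩ := ho
    subst hk
    have hS' : Real.sin ((2 * (k : ℝ) + 1) * θ) ≠ 0 := by
      have := hsin (2 * k + 1) (by omega) (by omega); push_cast at this; exact this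
    have hS2 : Real.sin ((2 * (k : ℝ) + 2) * θ) ≠ 0 := by
      have := hsin (2 * k + 2) (by omega) (by omega); push_cast at this; exact this
    rw [hτodd k hjn, (hOdd k hjn).2, (hOdd k hjn).1, (hvelO k).2, htan]
    push_cast
    rw [show (2 * (k : ℝ) + 1 + 1) * θ = (2 * (k : ℝ) + 2) * θ from by ring]
    field_simp
    try ring
    try tauto
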